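/- Let g ≥ 1 and N ≥ 2 be integers. Let t_1, …, t_N ∈ (0,1) be real numbers such that t_1 + ⋯ + t_N ∈ ℤ but the sum of any proper nonempty subset of the t_j is not an integer, and let t = Diag(e^{2πi t_1}, …, e^{2πi t_N}) ∈ SU(N). Let V be a proper nonempty subset of {1,…,N}. Then there do NOT exist matrices A_1, …, A_g, B_1, …, B_g ∈ SU(N) satisfying both: (1) (A_m)_{ij} = 0 and (B_m)_{ij} = 0 for all m ∈ {1,…,g} and all (i,j) ∈ V × ({1,…,N} \ V); and (2) ∏_{m=1}^{g} [A_m, B_m] = t, where [A,B] = ABA^{-1}B^{-1}. -/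

import Mathlib

section aux

variable {N : ℕ} (V : Finset (Fin N))

/-- Zero block predicate: entries on `V × Vᶜ` vanish. -/
def zb (M : Matrix (Fin N) (Fin N) ℂ) : Prop := ∀ i ∈ V, ∀ j ∉ V, M i j = 0

/-- Submatrix on `V`. -/
def subm (M : Matrix (Fin N) (Fin N) ℂ) : Matrix {x // x ∈ V} {x // x ∈ V} ℂ :=
  M.submatrix Subtype.val Subtype.val

variable {V}

lemma zb_mul {M M' : Matrix (Fin N) (Fin N) ℂ} (hM : zb V M) (hM' : zb V M') :
    zb V (M * M') := by
  intro i hi j hj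
  rw [Matrix.mul_apply]
  refine Finset.sum_eq_zero fun k _ => ?_
  by_cases hk : k ∈ V
  · rw [hM' k hk j hj, mul_zero]
  · rw [hM i hi k hk, zero_mul]

lemma zb_one : zb V (1 : Matrix (Fin N) (Fin N) ℂ) := by
  intro i hi j hj
  exact Matrix.one_apply_ne (fun h => hj (h ▸ hi))

lemma subm_mul {M M' : Matrix (Fin N) (Fin N) ℂ} (hM : zb V M) :
    subm V (M * M') = subm V M * subm V M' := by
  ext i j
  rw [subm, Matrix.submatrix_apply, Matrix.mul_apply, Matrix.mul_apply]
  have h1 : ∑ k : Fin N, M i.val k * M' k j.val = ∑ k ∈ V, M i.val k * M' k j.val := by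
    refine (Finset.sum_subset V.subset_univ fun k _ hk => ?_).symm
    rw [hM i.val i.2 k hk, zero_mul]
  rw [h1, ← Finset.sum_coe_sort V (fun k => M i.val k * M' k j.val)]
  rfl

lemma subm_one : subm V (1 : Matrix (Fin N) (Fin N) ℂ) = 1 := by
  ext i j
  rw [subm, Matrix.submatrix_apply, Matrix.one_apply, Matrix.one_apply]
  simp only [Subtype.ext_iff]

/-- Key lemma: a unitary matrix with zero `V × Vᶜ` block also has zero `Vᶜ × V` block. -/
lemma zb_unitary_other {M : Matrix (Fin N) (Fin N) ℂ}
    (hM : M ∈ Matrix.unitaryGroup (Fin N) ℂ) (hz : zb V M) :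
    ∀ i ∉ V, ∀ j ∈ V, M i j = 0 := by
  have hrow : ∀ i, ∑ j, Complex.normSq (M i j) = 1 := by
    intro i
    have h := congrFun (congrFun hM.2 i) i
    rw [Matrix.mul_apply] at h
    rw [Matrix.one_apply_eq] at h
    have h2 : ∑ j, ((Complex.normSq (M i j) : ℂ)) = 1 := by
      rw [← h]
      refine Finset.sum_congr rfl fun j _ => ?_
      rw [Matrix.star_apply, ← Complex.mul_conj]
      rfl
    rw [← Complex.ofReal_sum] at h2
    exact_mod_cast h2
  have hcol : ∀ j, ∑ i, Complex.normSq (M i j) = 1 := by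
    intro j
    have h := congrFun (congrFun hM.1 j) j
    rw [Matrix.mul_apply] at h
    rw [Matrix.one_apply_eq] at h
    have h2 : ∑ i, ((Complex.normSq (M i j) : ℂ)) = 1 := by
      rw [← h]
      refine Finset.sum_congr rfl fun i _ => ?_
      rw [Matrix.star_apply, mul_comm, ← Complex.mul_conj]
      rfl
    rw [← Complex.ofReal_sum] at h2
    exact_mod_cast h2
  have e1 : ∑ j ∈ V, ∑ i, Complex.normSq (M i j) = (V.card : ℝ) := by
    simp [hcol]
  have e2 : ∑ j ∈ V, ∑ i ∈ V, Complex.normSq (M i j) = (V.card : ℝ) := by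
    rw [Finset.sum_comm]
    have : ∀ i ∈ V, ∑ j ∈ V, Complex.normSq (M i j) = 1 := by
      intro i hi
      rw [← hrow i]
      refine Finset.sum_subset V.subset_univ fun j _ hj => ?_
      rw [hz i hi j hj]; simp
    rw [Finset.sum_congr rfl this]
    simp
  have e3 : ∀ j ∈ V, ∑ i, Complex.normSq (M i j)
      = ∑ i ∈ V, Complex.normSq (M i j) + ∑ i ∈ Vᶜ, Complex.normSq (M i j) := by
    intro j _
    exact (Finset.sum_add_sum_compl V _).symm
  rw [Finset.sum_congr rfl e3, Finset.sum_add_distrib, e2] at e1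
  have e4 : ∑ j ∈ V, ∑ i ∈ Vᶜ, Complex.normSq (M i j) = 0 := by linarith
  intro i hi j hj
  have h5 := (Finset.sum_eq_zero_iff_of_nonneg
    (fun j _ => Finset.sum_nonneg fun i _ => Complex.normSq_nonneg _)).mp e4 j hj
  have h6 := (Finset.sum_eq_zero_iff_of_nonneg
    (fun i _ => Complex.normSq_nonneg _)).mp h5 i (Finset.mem_compl.mpr hi)
  exact Complex.normSq_eq_zero.mp h6

lemma zb_star {M : Matrix (Fin N) (Fin N) ℂ}
    (hM : M ∈ Matrix.unitaryGroup (Fin N) ℂ) (hz : zb V M) : zb V (star M) := by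
  intro i hi j hj
  rw [Matrix.star_apply, zb_unitary_other hM hz j hj i hi, star_zero]

lemma det_subm_list {l : List (Matrix (Fin N) (Fin N) ℂ)}
    (h : ∀ M ∈ l, zb V M ∧ (subm V M).det = 1) :
    zb V l.prod ∧ (subm V l.prod).det = 1 := by
  induction l with
  | nil => simpa [subm_one] using zb_one
  | cons x xs ih =>
    have hx := h x List.mem_cons_self
    have hxs := ih fun M hM => h M (List.mem_cons_of_mem x hM)
    constructor
    · rw [List.prod_cons]; exact zb_mul hx.1 hxs.1
    · rw [List.prod_cons, subm_mul hx.1, Matrix.det_mul, hx.2, hxs.2, one_mul]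

end aux

/-- The emptiness statement in the proof of Lemma 4.3 ("vanishing"): let `t` be a
generic diagonal element of `SU(N)` given by `t = Diag(e^{2πi t_1}, …, e^{2πi t_N})`
with all `t_j ∈ (0,1)`, `∑ t_j ∈ ℤ`, and no proper nonempty subset of the `t_j`
summing to an integer. Then for any proper nonempty subset `V ⊆ {1,…,N}` there are no
matrices `A_1, …, A_g, B_1, …, B_g ∈ SU(N)` all of whose entries indexed by
`V × ({1,…,N} \ V)` vanish and with `∏_m [A_m, B_m] = t` (the product of commutators
taken in order, `[A,B] = A B A⁻¹ B⁻¹`). -/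
theorem stmt_7 (g N : ℕ) (hg : 1 ≤ g) (hN : 2 ≤ N)
    (t : Fin N → ℝ) (ht0 : ∀ j, t j ∈ Set.Ioo (0 : ℝ) 1)
    (htZ : ∃ k : ℤ, ∑ j, t j = k)
    (htgen : ∀ S : Finset (Fin N), S.Nonempty → S ≠ Finset.univ →
      ∀ k : ℤ, ∑ j ∈ S, t j ≠ k)
    (V : Finset (Fin N)) (hV1 : V.Nonempty) (hV2 : V ≠ Finset.univ) :
    ¬ ∃ A B : Fin g → Matrix (Fin N) (Fin N) ℂ,
      (∀ m, A m ∈ Matrix.specialUnitaryGroup (Fin N) ℂ ∧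
        B m ∈ Matrix.specialUnitaryGroup (Fin N) ℂ) ∧
      (∀ m, ∀ i ∈ V, ∀ j ∉ V, A m i j = 0 ∧ B m i j = 0) ∧
      ((List.finRange g).map fun m => A m * B m * (A m)⁻¹ * (B m)⁻¹).prod =
        Matrix.diagonal (fun j => Complex.exp (2 * Real.pi * Complex.I * (t j))) := by
  rintro ⟨A, B, hSU, hz, hprod⟩
  -- unitarity facts
  have hAu : ∀ m, A m ∈ Matrix.unitaryGroup (Fin N) ℂ := fun m =>
    ((Matrix.mem_specialUnitaryGroup_iff).mp (hSU m).1).1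
  have hBu : ∀ m, B m ∈ Matrix.unitaryGroup (Fin N) ℂ := fun m =>
    ((Matrix.mem_specialUnitaryGroup_iff).mp (hSU m).2).1
  have hAz : ∀ m, zb V (A m) := fun m i hi j hj => (hz m i hi j hj).1
  have hBz : ∀ m, zb V (B m) := fun m i hi j hj => (hz m i hi j hj).2
  have hAinv : ∀ m, (A m)⁻¹ = star (A m) := fun m =>
    Matrix.inv_eq_right_inv (hAu m).2
  have hBinv : ∀ m, (B m)⁻¹ = star (B m) := fun m =>
    Matrix.inv_eq_right_inv (hBu m).2
  -- det of subm of star is inverse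
  have hstardet : ∀ (M : Matrix (Fin N) (Fin N) ℂ),
      M ∈ Matrix.unitaryGroup (Fin N) ℂ → zb V M →
      (subm V M).det * (subm V (star M)).det = 1 := by
    intro M hM hzM
    rw [← Matrix.det_mul, ← subm_mul hzM, hM.2, subm_one, Matrix.det_one]
  -- each commutator is in zb and has subm-det 1
  have hcomm : ∀ M ∈ (List.finRange g).map
      (fun m => A m * B m * (A m)⁻¹ * (B m)⁻¹),
      zb V M ∧ (subm V M).det = 1 := by
    intro M hM
    rw [List.mem_map] at hM
    obtain ⟨m, -, rfl⟩ := hM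
    rw [hAinv m, hBinv m]
    have hAs := zb_star (hAu m) (hAz m)
    have hBs := zb_star (hBu m) (hBz m)
    refine ⟨zb_mul (zb_mul (zb_mul (hAz m) (hBz m)) hAs) hBs, ?_⟩
    rw [subm_mul (zb_mul (zb_mul (hAz m) (hBz m)) hAs),
        subm_mul (zb_mul (hAz m) (hBz m)), subm_mul (hAz m),
        Matrix.det_mul, Matrix.det_mul, Matrix.det_mul]
    have h1 := hstardet (A m) (hAu m) (hAz m)
    have h2 := hstardet (B m) (hBu m) (hBz m)
    calc (subm V (A m)).det * (subm V (B m)).det * (subm V (star (A m))).det *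
          (subm V (star (B m))).det
        = ((subm V (A m)).det * (subm V (star (A m))).det) *
          ((subm V (B m)).det * (subm V (star (B m))).det) := by ring
      _ = 1 := by rw [h1, h2, one_mul]
  have hdet1 := (det_subm_list hcomm).2
  rw [hprod] at hdet1
  -- compute the determinant of the subm of the diagonal matrix
  have hsubdiag : subm V (Matrix.diagonal
      (fun j => Complex.exp (2 * Real.pi * Complex.I * (t j))))
      = Matrix.diagonal (fun i : {x // x ∈ V} =>
          Complex.exp (2 * Real.pi * Complex.I * (t i.val))) := by
    ext i j
    rw [subm, Matrix.submatrix_apply, Matrix.diagonal_apply, Matrix.diagonal_apply]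
    by_cases h : i = j
    · simp [h]
    · rw [if_neg h, if_neg (fun hv => h (Subtype.ext hv))]
  rw [hsubdiag, Matrix.det_diagonal] at hdet1
  rw [← Complex.exp_sum] at hdet1
  have hsum : ∑ i : {x // x ∈ V}, 2 * Real.pi * Complex.I * (t i.val)
      = 2 * Real.pi * Complex.I * ((∑ j ∈ V, t j : ℝ) : ℂ) := by
    rw [← Finset.mul_sum]
    congr 1
    rw [Finset.sum_coe_sort V (fun j => ((t j : ℝ) : ℂ))]
    push_cast
    rfl
  rw [hsum] at hdet1
  rw [Complex.exp_eq_one_iff] at hdet1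
  obtain ⟨n, hn⟩ := hdet1
  have hpi : (2 * Real.pi * Complex.I : ℂ) ≠ 0 := by
    simp [Real.pi_ne_zero, Complex.I_ne_zero]
  have hn' : ((∑ j ∈ V, t j : ℝ) : ℂ) = (n : ℂ) := by
    have : (2 * Real.pi * Complex.I : ℂ) * ((∑ j ∈ V, t j : ℝ) : ℂ)
        = (2 * Real.pi * Complex.I : ℂ) * (n : ℂ) := by
      rw [hn]; ring
    exact mul_left_cancel₀ hpi this
  have : (∑ j ∈ V, t j : ℝ) = (n : ℝ) := by exact_mod_cast hn'
  exact htgen V hV1 hV2 n this
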